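/- arXiv:2311.14934 — 4 statements merged into one kernel-verified Lean document; each statement's English description precedes it below -/
import Mathlib

section
/- Define ψ_γ : [0,∞) → ℝ by ψ_γ(v) = ρ_γ(√v), where ρ_γ is the MCP with parameter γ > 0. Then ψ_γ is concave on [0,∞). -/
/-- The Minimax Concave Penalty with threshold `γ`. -/
noncomputable def mcp (γ y : ℝ) : ℝ := if y < γ then y - y^2 / (2*γ) else γ/2

private lemma mcp_sqrt_le (γ : ℝ) (hγ : 0 < γ) (s : ℝ) (hs0 : 0 < s) (hsγ : s ≤ γ)
    (x : ℝ) (hx : 0 ≤ x) :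
    mcp γ (Real.sqrt x) ≤ x / (2*s) - x / (2*γ) + s/2 := by
  have hsq : Real.sqrt x ^ 2 = x := Real.sq_sqrt hx
  by_cases h : Real.sqrt x < γ
  · rw [mcp, if_pos h, hsq]
    have h1 : Real.sqrt x - s/2 ≤ x / (2*s) := by
      rw [le_div_iff₀ (by positivity)]
      nlinarith [sq_nonneg (Real.sqrt x - s)]
    linarith
  · rw [mcp, if_neg h]
    push_neg at h
    have hx2 : γ^2 ≤ x := by nlinarith [Real.sqrt_nonneg x]
    have heq : x / (2*s) - x / (2*γ) = x * (γ - s) / (2*s*γ) := by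
      field_simp
    rw [heq]
    rw [← sub_le_iff_le_add, le_div_iff₀ (by positivity)]
    nlinarith [mul_nonneg (by nlinarith : (0:ℝ) ≤ x - s*γ) (sub_nonneg.2 hsγ)]

/-- The map `ψ_γ(v) = ρ_γ(√v)` is concave on `[0,∞)` for `γ > 0`. -/
theorem mcp_sqrt_concave (γ : ℝ) (hγ : 0 < γ) :
    ConcaveOn ℝ (Set.Ici 0) (fun v => mcp γ (Real.sqrt v)) := by
  have hf0 : mcp γ (Real.sqrt 0) = 0 := by
    rw [Real.sqrt_zero, mcp, if_pos hγ]; ring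
  refine ⟨convex_Ici 0, ?_⟩
  intro x hx y hy a b ha hb hab
  simp only [smul_eq_mul] at *
  have hx' : (0:ℝ) ≤ x := hx
  have hy' : (0:ℝ) ≤ y := hy
  set c := a * x + b * y with hc
  have hc0 : 0 ≤ c := by positivity
  rcases eq_or_lt_of_le hc0 with hceq | hcpos
  · -- c = 0
    have hax : a * x = 0 := by nlinarith [mul_nonneg ha hx', mul_nonneg hb hy']
    have hby : b * y = 0 := by nlinarith [mul_nonneg ha hx', mul_nonneg hb hy']
    have h1 : a * mcp γ (Real.sqrt x) = 0 := by
      rcases mul_eq_zero.1 hax with h | h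
      · rw [h, zero_mul]
      · rw [h, hf0, mul_zero]
    have h2 : b * mcp γ (Real.sqrt y) = 0 := by
      rcases mul_eq_zero.1 hby with h | h
      · rw [h, zero_mul]
      · rw [h, hf0, mul_zero]
    rw [h1, h2, ← hceq, hf0]; norm_num
  · -- c > 0
    set s := min (Real.sqrt c) γ with hs
    have hsc : 0 < Real.sqrt c := Real.sqrt_pos.2 hcpos
    have hs0 : 0 < s := lt_min hsc hγ
    have hsγ : s ≤ γ := min_le_right _ _
    have hxb := mcp_sqrt_le γ hγ s hs0 hsγ x hx'
    have hyb := mcp_sqrt_le γ hγ s hs0 hsγ y hy'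
    have hceq : mcp γ (Real.sqrt c) = c / (2*s) - c / (2*γ) + s/2 := by
      by_cases h : Real.sqrt c < γ
      · have hseq : s = Real.sqrt c := min_eq_left h.le
        rw [mcp, if_pos h, Real.sq_sqrt hc0, hseq]
        have hmul : Real.sqrt c * Real.sqrt c = c := Real.mul_self_sqrt hc0
        have hdiv : c / (2 * Real.sqrt c) = Real.sqrt c / 2 := by
          rw [div_eq_div_iff (by positivity) (by norm_num)]
          linarith [hmul]
        rw [hdiv]; ring
      · have hseq : s = γ := min_eq_right (le_of_not_gt h)
        rw [mcp, if_neg h, hseq]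
        ring
    show a * mcp γ (Real.sqrt x) + b * mcp γ (Real.sqrt y) ≤ mcp γ (Real.sqrt c)
    have key : a * (x / (2*s) - x / (2*γ) + s/2) + b * (y / (2*s) - y / (2*γ) + s/2)
        = c / (2*s) - c / (2*γ) + s/2 := by
      have hb' : b = 1 - a := by linarith
      rw [hc, hb']
      ring
    calc a * mcp γ (Real.sqrt x) + b * mcp γ (Real.sqrt y)
        ≤ a * (x / (2*s) - x / (2*γ) + s/2) + b * (y / (2*s) - y / (2*γ) + s/2) :=
          add_le_add (mul_le_mul_of_nonneg_left hxb ha) (mul_le_mul_of_nonneg_left hyb hb)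
      _ = c / (2*s) - c / (2*γ) + s/2 := key
      _ = mcp γ (Real.sqrt c) := hceq.symm
end

section
/- With the notation above, the matrix diag(q) + W ⊙ Ã is positive semidefinite, where q_m = Σ_j W_{mj} A_{mj} / d_m. Consequently, for any λ ≥ 0, diag(q) + W ⊙ Ã + λI is positive semidefinite. -/
open Matrix

lemma posSemidef_add' {n : ℕ} {M N : Matrix (Fin n) (Fin n) ℝ}
    (hM : M.PosSemidef) (hN : N.PosSemidef) : (M + N).PosSemidef := by
  refine posSemidef_iff_dotProduct_mulVec.mpr ⟨hM.1.add hN.1, fun x => ?_⟩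
  rw [add_mulVec, dotProduct_add]
  exact add_nonneg (hM.dotProduct_mulVec_nonneg x) (hN.dotProduct_mulVec_nonneg x)

lemma posSemidef_smul_one {n : ℕ} {lam : ℝ} (hlam : 0 ≤ lam) :
    (lam • (1 : Matrix (Fin n) (Fin n) ℝ)).PosSemidef := by
  refine posSemidef_iff_dotProduct_mulVec.mpr ⟨?_, fun x => ?_⟩
  · unfold Matrix.IsHermitian
    ext i j
    simp [Matrix.one_apply, eq_comm]
  · rw [smul_mulVec, one_mulVec, dotProduct_smul]
    refine mul_nonneg hlam ?_
    refine Finset.sum_nonneg fun i _ => ?_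
    simp [mul_self_nonneg]

/-- The matrix `diag(q) + W ⊙ Ã` is positive semidefinite, and consequently so
is `diag(q) + W ⊙ Ã + λI` for any `λ ≥ 0`. -/
theorem diag_add_hadamard_posSemidef (n : ℕ)
    (A W : Matrix (Fin n) (Fin n) ℝ)
    (hA01 : ∀ i j, A i j = 0 ∨ A i j = 1) (hAsymm : A.IsSymm)
    (deg : Fin n → ℝ) (hdeg : ∀ i, deg i = ∑ j, A i j) (hdegpos : ∀ i, 0 < deg i)
    (hWsymm : W.IsSymm) (hWnn : ∀ i j, 0 ≤ W i j) (hWdiag : ∀ i, W i i = 0)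
    (Atil : Matrix (Fin n) (Fin n) ℝ)
    (hAtil : ∀ i j, Atil i j = A i j / Real.sqrt (deg i * deg j))
    (q : Fin n → ℝ) (hq : ∀ m, q m = ∑ j, W m j * A m j / deg m) :
    (Matrix.diagonal q + Matrix.hadamard W Atil).PosSemidef ∧
    ∀ lam : ℝ, 0 ≤ lam →
      (Matrix.diagonal q + Matrix.hadamard W Atil
        + lam • (1 : Matrix (Fin n) (Fin n) ℝ)).PosSemidef := by
  set s : Fin n → ℝ := fun i => Real.sqrt (deg i) with hs
  have hspos : ∀ i, 0 < s i := fun i => Real.sqrt_pos.mpr (hdegpos i)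
  have hssq : ∀ i, s i * s i = deg i := fun i =>
    Real.mul_self_sqrt (hdegpos i).le
  have hAtil' : ∀ i j, Atil i j = A i j / (s i * s j) := by
    intro i j
    rw [hAtil, Real.sqrt_mul (hdegpos i).le]
  have hAij : ∀ i j, A j i = A i j := fun i j => by
    conv_lhs => rw [← hAsymm]
    rfl
  have hWij : ∀ i j, W j i = W i j := fun i j => by
    conv_lhs => rw [← hWsymm]
    rfl
  have hAnn : ∀ i j, 0 ≤ A i j := by
    intro i j; rcases hA01 i j with h | h <;> rw [h] <;> norm_num
  have main : (Matrix.diagonal q + Matrix.hadamard W Atil).PosSemidef := by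
    rw [posSemidef_iff_dotProduct_mulVec]
    constructor
    · unfold Matrix.IsHermitian
      ext i j
      simp only [conjTranspose_apply, Matrix.add_apply, Matrix.hadamard_apply,
        Matrix.diagonal_apply, star_trivial]
      rw [hAtil', hAtil', hAij, hWij, mul_comm (s j)]
      by_cases h : i = j
      · subst h; simp
      · simp [h, Ne.symm h]
    · intro x
      have hquad : (star x) ⬝ᵥ ((Matrix.diagonal q + Matrix.hadamard W Atil) *ᵥ x)
          = (∑ i, q i * (x i * x i))
            + ∑ i, ∑ j, W i j * A i j / (s i * s j) * (x i * x j) := by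
        simp only [star_trivial, add_mulVec, dotProduct_add, mulVec_diagonal]
        congr 1
        · simp only [dotProduct, mulVec_diagonal]
          exact Finset.sum_congr rfl fun i _ => by ring
        · simp only [dotProduct, mulVec, Finset.mul_sum]
          refine Finset.sum_congr rfl fun i _ => Finset.sum_congr rfl fun j _ => ?_
          simp only [Matrix.hadamard_apply, hAtil']
          ring
      rw [hquad]
      have hkey : (∑ i, q i * (x i * x i))
            + ∑ i, ∑ j, W i j * A i j / (s i * s j) * (x i * x j)
          = (1/2) * ∑ i, ∑ j, W i j * A i j * (x i / s i + x j / s j)^2 := by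
        have hexp : ∀ i j, W i j * A i j * (x i / s i + x j / s j)^2
            = W i j * A i j / deg i * (x i * x i)
              + W i j * A i j / deg j * (x j * x j)
              + 2 * (W i j * A i j / (s i * s j) * (x i * x j)) := by
          intro i j
          have h1 : s i ≠ 0 := (hspos i).ne'
          have h2 : s j ≠ 0 := (hspos j).ne'
          rw [← hssq i, ← hssq j]
          field_simp
          ring
        have hsum : ∑ i, ∑ j, W i j * A i j * (x i / s i + x j / s j)^2
            = (∑ i, ∑ j, W i j * A i j / deg i * (x i * x i))
              + (∑ i, ∑ j, W i j * A i j / deg j * (x j * x j))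
              + 2 * ∑ i, ∑ j, W i j * A i j / (s i * s j) * (x i * x j) := by
          rw [Finset.mul_sum]
          simp only [← Finset.sum_add_distrib, Finset.mul_sum]
          exact Finset.sum_congr rfl fun i _ => Finset.sum_congr rfl fun j _ =>
            hexp i j
        have hswap : (∑ i, ∑ j, W i j * A i j / deg j * (x j * x j))
            = ∑ i, ∑ j, W i j * A i j / deg i * (x i * x i) := by
          rw [Finset.sum_comm]
          exact Finset.sum_congr rfl fun i _ => Finset.sum_congr rfl fun j _ => by
            rw [hAij, hWij]
        have hqsum : (∑ i, q i * (x i * x i))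
            = ∑ i, ∑ j, W i j * A i j / deg i * (x i * x i) := by
          refine Finset.sum_congr rfl fun i _ => ?_
          rw [hq, Finset.sum_mul]
        rw [hsum, hswap, hqsum]
        ring
      rw [hkey]
      refine mul_nonneg (by norm_num) ?_
      refine Finset.sum_nonneg fun i _ => Finset.sum_nonneg fun j _ => ?_
      exact mul_nonneg (mul_nonneg (hWnn i j) (hAnn i j)) (sq_nonneg _)
  exact ⟨main, fun lam hlam => posSemidef_add' main (posSemidef_smul_one hlam)⟩
end

section
/- Let H := 2(diag(q) − W⊙Ã + λI) be the Hessian of the quadratic surrogate and Q̂ := 2(diag(q) + λI). Then 2Q̂ − H = 2(diag(q) + W⊙Ã + λI) is positive semidefinite; i.e., the diagonal approximation Q̂ satisfies H ⪯ 2Q̂. -/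
open Matrix

private lemma aux_quad (n : ℕ) (c : Fin n → Fin n → ℝ) (hc : ∀ i j, 0 ≤ c i j)
    (hcs : ∀ i j, c i j = c j i) (y : Fin n → ℝ) :
    0 ≤ ∑ i, ∑ j, c i j * (y i ^ 2 + y i * y j) := by
  have swap : (∑ i, ∑ j, c i j * (y i ^ 2 + y i * y j))
      = ∑ i, ∑ j, c i j * (y j ^ 2 + y j * y i) := by
    rw [Finset.sum_comm]
    exact Finset.sum_congr rfl fun i _ => Finset.sum_congr rfl fun j _ => by rw [hcs]
  have h2 : 2 * (∑ i, ∑ j, c i j * (y i ^ 2 + y i * y j))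
      = ∑ i, ∑ j, c i j * (y i + y j) ^ 2 := by
    rw [two_mul]
    nth_rewrite 2 [swap]
    rw [← Finset.sum_add_distrib]
    refine Finset.sum_congr rfl fun i _ => ?_
    rw [← Finset.sum_add_distrib]
    exact Finset.sum_congr rfl fun j _ => by ring
  have hnn : 0 ≤ ∑ i, ∑ j, c i j * (y i + y j) ^ 2 :=
    Finset.sum_nonneg fun i _ => Finset.sum_nonneg fun j _ =>
      mul_nonneg (hc i j) (sq_nonneg _)
  linarith

/-- With `H := 2(diag(q) − W⊙Ã + λI)` the Hessian of the quadratic surrogate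
and `Q̂ := 2(diag(q) + λI)`, we have `2Q̂ − H = 2(diag(q) + W⊙Ã + λI)`, which is
positive semidefinite; i.e. `H ⪯ 2Q̂` in the Loewner order. -/
theorem hessian_loewner_bound (n : ℕ)
    (A W : Matrix (Fin n) (Fin n) ℝ)
    (hA01 : ∀ i j, A i j = 0 ∨ A i j = 1) (hAsymm : A.IsSymm)
    (deg : Fin n → ℝ) (hdeg : ∀ i, deg i = ∑ j, A i j) (hdegpos : ∀ i, 0 < deg i)
    (hWsymm : W.IsSymm) (hWnn : ∀ i j, 0 ≤ W i j) (hWdiag : ∀ i, W i i = 0)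
    (Atil : Matrix (Fin n) (Fin n) ℝ)
    (hAtil : ∀ i j, Atil i j = A i j / Real.sqrt (deg i * deg j))
    (q : Fin n → ℝ) (hq : ∀ m, q m = ∑ j, W m j * A m j / deg m)
    (lam : ℝ) (hlam : 0 ≤ lam)
    (H Qhat : Matrix (Fin n) (Fin n) ℝ)
    (hH : H = (2:ℝ) • (Matrix.diagonal q - Matrix.hadamard W Atil
      + lam • (1 : Matrix (Fin n) (Fin n) ℝ)))
    (hQ : Qhat = (2:ℝ) • (Matrix.diagonal q + lam • (1 : Matrix (Fin n) (Fin n) ℝ))) :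
    (2:ℝ) • Qhat - H = (2:ℝ) • (Matrix.diagonal q + Matrix.hadamard W Atil
        + lam • (1 : Matrix (Fin n) (Fin n) ℝ)) ∧
    ((2:ℝ) • Qhat - H).PosSemidef := by
  have hAsym' : ∀ i j, A i j = A j i := fun i j => by
    have := congrFun (congrFun hAsymm j) i
    simpa [Matrix.transpose_apply] using this
  have hWsym' : ∀ i j, W i j = W j i := fun i j => by
    have := congrFun (congrFun hWsymm j) i
    simpa [Matrix.transpose_apply] using this
  have hAnn : ∀ i j, 0 ≤ A i j := fun i j => by
    rcases hA01 i j with h | h <;> simp [h]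
  have heq : (2:ℝ) • Qhat - H = (2:ℝ) • (Matrix.diagonal q + Matrix.hadamard W Atil
      + lam • (1 : Matrix (Fin n) (Fin n) ℝ)) := by
    subst hH hQ
    ext i j
    simp [Matrix.sub_apply, Matrix.add_apply, Matrix.smul_apply, Matrix.hadamard_apply]
    ring
  refine ⟨heq, ?_⟩
  rw [heq]
  set M : Matrix (Fin n) (Fin n) ℝ := Matrix.diagonal q + Matrix.hadamard W Atil
      + lam • (1 : Matrix (Fin n) (Fin n) ℝ) with hM
  have hAtilsym : ∀ i j, Atil i j = Atil j i := fun i j => by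
    rw [hAtil, hAtil, hAsym' i j, mul_comm]
  refine Matrix.posSemidef_iff_dotProduct_mulVec.2 ⟨?_, ?_⟩
  · -- Hermitian
    ext i j
    simp only [Matrix.conjTranspose_apply, star, Matrix.smul_apply, hM, Matrix.add_apply,
      Matrix.hadamard_apply, Matrix.diagonal_apply, Matrix.one_apply]
    rw [hWsym' j i, hAtilsym j i]
    by_cases h : i = j <;> simp [h, eq_comm]
  · intro x
    have hx : star x = x := by simp
    rw [hx]
    set y : Fin n → ℝ := fun i => x i / Real.sqrt (deg i) with hy
    set c : Fin n → Fin n → ℝ := fun i j => W i j * A i j with hcdef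
    have hsq : ∀ i, Real.sqrt (deg i) ^ 2 = deg i := fun i =>
      Real.sq_sqrt (hdegpos i).le
    have hsqpos : ∀ i, 0 < Real.sqrt (deg i) := fun i =>
      Real.sqrt_pos.2 (hdegpos i)
    have hqterm : ∀ i, q i * x i ^ 2 = ∑ j, c i j * y i ^ 2 := by
      intro i
      rw [hq i, Finset.sum_mul]
      refine Finset.sum_congr rfl fun j _ => ?_
      have hyy : y i ^ 2 = x i ^ 2 / deg i := by
        rw [hy]; simp only []; rw [div_pow, hsq i]
      rw [hcdef]; simp only []
      rw [hyy]; ring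
    have hcross : ∀ i j, x i * (W i j * Atil i j * x j) = c i j * (y i * y j) := by
      intro i j
      rw [hAtil, hcdef, hy]
      simp only []
      rw [Real.sqrt_mul (hdegpos i).le]
      field_simp
    have inner : ∀ i, (∑ j, (2:ℝ) * (Matrix.diagonal q i j + W i j * Atil i j
          + lam * (if i = j then (1:ℝ) else 0)) * x j)
        = 2 * q i * x i + 2 * (∑ j, W i j * Atil i j * x j) + 2 * lam * x i := by
      intro i
      have hterm : ∀ j, (2:ℝ) * (Matrix.diagonal q i j + W i j * Atil i j
            + lam * (if i = j then (1:ℝ) else 0)) * x j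
          = 2 * (Matrix.diagonal q i j * x j) + 2 * (W i j * Atil i j * x j)
            + 2 * lam * ((if i = j then (1:ℝ) else 0) * x j) := fun j => by ring
      simp only [hterm, Finset.sum_add_distrib]
      have hd : (∑ j, Matrix.diagonal q i j * x j) = q i * x i := by
        rw [Finset.sum_eq_single i]
        · simp
        · intro b _ hb
          simp [Matrix.diagonal_apply, Ne.symm hb]
        · simp
      have ho : (∑ j, (if i = j then (1:ℝ) else 0) * x j) = x i := by
        rw [Finset.sum_eq_single i]
        · simp
        · intro b _ hb
          simp [Ne.symm hb]
        · simp
      rw [← Finset.mul_sum, ← Finset.mul_sum, ← Finset.mul_sum, hd, ho]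
      ring
    have main_i : ∀ i, x i * (∑ j, (2:ℝ) * (Matrix.diagonal q i j + W i j * Atil i j
          + lam * (if i = j then (1:ℝ) else 0)) * x j)
        = 2 * (∑ j, c i j * (y i ^ 2 + y i * y j)) + 2 * (lam * x i ^ 2) := by
      intro i
      rw [inner i]
      have e1 : (∑ j, c i j * (y i ^ 2 + y i * y j))
          = q i * x i ^ 2 + ∑ j, c i j * (y i * y j) := by
        simp only [mul_add, Finset.sum_add_distrib]
        rw [hqterm i]
      have e2 : x i * (∑ j, W i j * Atil i j * x j) = ∑ j, c i j * (y i * y j) := by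
        rw [Finset.mul_sum]
        exact Finset.sum_congr rfl fun j _ => hcross i j
      rw [e1]
      calc x i * (2 * q i * x i + 2 * (∑ j, W i j * Atil i j * x j) + 2 * lam * x i)
          = 2 * (q i * x i ^ 2 + x i * (∑ j, W i j * Atil i j * x j)) + 2 * (lam * x i ^ 2) := by
            ring
        _ = 2 * (q i * x i ^ 2 + ∑ j, c i j * (y i * y j)) + 2 * (lam * x i ^ 2) := by
            rw [e2]
    have key : dotProduct x (((2:ℝ) • M) *ᵥ x)
        = 2 * ((∑ i, ∑ j, c i j * (y i ^ 2 + y i * y j)) + lam * ∑ i, x i ^ 2) := by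
      simp only [dotProduct, Matrix.mulVec, Matrix.smul_apply, hM, Matrix.add_apply,
        Matrix.hadamard_apply, Matrix.one_apply, smul_eq_mul, dotProduct]
      rw [show (∑ i, x i * ∑ j, (2:ℝ) * (Matrix.diagonal q i j + W i j * Atil i j
            + lam * (if i = j then (1:ℝ) else 0)) * x j)
          = ∑ i, (2 * (∑ j, c i j * (y i ^ 2 + y i * y j)) + 2 * (lam * x i ^ 2)) from
        Finset.sum_congr rfl fun i _ => main_i i]
      rw [Finset.sum_add_distrib, ← Finset.mul_sum, ← Finset.mul_sum, mul_add]
      congr 1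
      rw [← Finset.mul_sum]
    rw [key]
    have hc : ∀ i j, 0 ≤ c i j := fun i j => mul_nonneg (hWnn i j) (hAnn i j)
    have hcs : ∀ i j, c i j = c j i := fun i j => by
      rw [hcdef]; simp only []; rw [hWsym' i j, hAsym' i j]
    have h1 := aux_quad n c hc hcs y
    have h2 : 0 ≤ lam * ∑ i, x i ^ 2 :=
      mul_nonneg hlam (Finset.sum_nonneg fun i _ => sq_nonneg _)
    linarith
end

section
/- The APPNP fixed-point recovery: if each layer performs F^{(k+1)} = (1/(1+λ)) Ã F^{(k)} + (λ/(1+λ)) F^{(0)} with ‖Ã‖₂ ≤ 1 and λ > 0, then the iterates converge to the unique fixed point F* = λ((1+λ)I − Ã)⁻¹ F^{(0)}, which is the unique minimizer of the objective Σ_{(i,j)∈E} ‖f_i/√d_i − f_j/√d_j‖² + λ Σ_i ‖f_i − f_i^{(0)}‖², provided Ã is the symmetrically normalized adjacency of a graph with positive degrees. -/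
open Matrix

/-- Quadratic form bound from the ℓ2 operator norm. -/
lemma appnp_quad_bound (n : ℕ) (A : Matrix (Fin n) (Fin n) ℝ)
    (hnorm : ‖Matrix.toEuclideanCLM (𝕜 := ℝ) A‖ ≤ 1) (x : Fin n → ℝ) :
    x ⬝ᵥ (A *ᵥ x) ≤ x ⬝ᵥ x := by
  set v : EuclideanSpace ℝ (Fin n) := (WithLp.equiv 2 _).symm x with hv
  have h1 : inner ℝ v ((Matrix.toEuclideanCLM (𝕜 := ℝ) A) v) = x ⬝ᵥ (A *ᵥ x) := by
    rw [hv, WithLp.equiv_symm_apply, Matrix.toEuclideanCLM_toLp, EuclideanSpace.inner_toLp_toLp]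
    simp [Matrix.toLin'_apply, dotProduct_comm]
  have h2 : (inner ℝ v v : ℝ) = x ⬝ᵥ x := by
    rw [hv, WithLp.equiv_symm_apply, EuclideanSpace.inner_toLp_toLp]; simp
  have h3 : inner ℝ v ((Matrix.toEuclideanCLM (𝕜 := ℝ) A) v)
      ≤ ‖v‖ * ‖(Matrix.toEuclideanCLM (𝕜 := ℝ) A) v‖ := real_inner_le_norm _ _
  have h4 : ‖(Matrix.toEuclideanCLM (𝕜 := ℝ) A) v‖ ≤ ‖v‖ := by
    calc ‖(Matrix.toEuclideanCLM (𝕜 := ℝ) A) v‖ ≤ ‖Matrix.toEuclideanCLM (𝕜 := ℝ) A‖ * ‖v‖ :=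
          (Matrix.toEuclideanCLM (𝕜 := ℝ) A).le_opNorm v
      _ ≤ 1 * ‖v‖ := by gcongr
      _ = ‖v‖ := one_mul _
  have h5 : ‖v‖^2 = x ⬝ᵥ x := by rw [← real_inner_self_eq_norm_sq]; exact h2
  have h6 : ‖v‖ * ‖(Matrix.toEuclideanCLM (𝕜 := ℝ) A) v‖ ≤ ‖v‖^2 := by
    nlinarith [norm_nonneg v]
  calc x ⬝ᵥ (A *ᵥ x) = inner ℝ v ((Matrix.toEuclideanCLM (𝕜 := ℝ) A) v) := h1.symm
    _ ≤ ‖v‖ * ‖(Matrix.toEuclideanCLM (𝕜 := ℝ) A) v‖ := h3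
    _ ≤ ‖v‖^2 := h6
    _ = x ⬝ᵥ x := h5

/-- `(1+λ)I - Ã` is positive definite. -/
lemma appnp_posdef (n : ℕ) (A : Matrix (Fin n) (Fin n) ℝ) (hsymm : A.IsSymm)
    (lam : ℝ) (hlam : 0 < lam)
    (hquad : ∀ x : Fin n → ℝ, x ⬝ᵥ (A *ᵥ x) ≤ x ⬝ᵥ x) :
    ((1+lam) • (1 : Matrix (Fin n) (Fin n) ℝ) - A).PosDef := by
  refine Matrix.PosDef.of_dotProduct_mulVec_pos ?_ ?_
  · unfold Matrix.IsHermitian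
    rw [conjTranspose_sub, conjTranspose_smul]
    simp [Matrix.conjTranspose_eq_transpose_of_trivial, hsymm.eq]
  · intro x hx
    have hxx : 0 < x ⬝ᵥ x := by
      rcases lt_or_eq_of_le (dotProduct_self_star_nonneg x) with h | h
      · simpa using h
      · exact absurd (dotProduct_self_eq_zero.mp (by simpa using h.symm)) hx
    have : ((1+lam) • (1 : Matrix (Fin n) (Fin n) ℝ) - A) *ᵥ x
        = (1+lam) • x - A *ᵥ x := by
      rw [sub_mulVec, smul_mulVec, one_mulVec]
    rw [this]
    have h2 := hquad x
    simp only [star_trivial, dotProduct_sub, dotProduct_smul, smul_eq_mul]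
    nlinarith [h2, hxx]

/-- Strict positivity of the trace quadratic form for a positive definite matrix. -/
lemma appnp_trace_pos (n d : ℕ) (M : Matrix (Fin n) (Fin n) ℝ) (hM : M.PosDef)
    (H : Matrix (Fin n) (Fin d) ℝ) (hH : H ≠ 0) :
    0 < Matrix.trace (Hᵀ * M * H) := by
  have key : Matrix.trace (Hᵀ * M * H)
      = ∑ j : Fin d, (fun i => H i j) ⬝ᵥ (M *ᵥ fun i => H i j) := by
    simp only [Matrix.trace, Matrix.diag, Matrix.mul_apply, Matrix.transpose_apply,
      dotProduct, mulVec, Finset.mul_sum, Finset.sum_mul]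
    rw [Finset.sum_congr rfl]
    intro j _
    rw [Finset.sum_comm]
    congr 1; ext i
    congr 1; ext b
    ring
  rw [key]
  have hcols : ∃ j : Fin d, (fun i => H i j) ≠ 0 := by
    by_contra h
    push_neg at h
    apply hH
    ext i j
    have := congr_fun (h j) i
    simpa using this
  obtain ⟨j0, hj0⟩ := hcols
  refine Finset.sum_pos' (fun j _ => ?_) ⟨j0, Finset.mem_univ j0, ?_⟩
  · by_cases hz : (fun i => H i j) = 0
    · rw [hz]; simp
    · exact le_of_lt (by simpa using hM.dotProduct_mulVec_pos hz)
  · simpa using hM.dotProduct_mulVec_pos hj0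

/-- Second-order expansion of the smoothing objective around a stationary point. -/
lemma appnp_expand (n d : ℕ) (Q : Matrix (Fin n) (Fin n) ℝ) (hQ : Qᵀ = Q)
    (S H F0 : Matrix (Fin n) (Fin d) ℝ) (lam : ℝ)
    (hS : Q * S + lam • (S - F0) = 0) :
    Matrix.trace ((S+H)ᵀ * Q * (S+H)) + lam * Matrix.trace ((S+H-F0)ᵀ * (S+H-F0))
      = Matrix.trace (Sᵀ * Q * S) + lam * Matrix.trace ((S-F0)ᵀ * (S-F0))
        + (Matrix.trace (Hᵀ * ((Q + lam • (1:Matrix (Fin n) (Fin n) ℝ)) * H))) := by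
  have hSF : S + H - F0 = (S - F0) + H := by abel
  have c1 : Matrix.trace (Sᵀ * Q * H) = Matrix.trace (Hᵀ * Q * S) := by
    rw [← Matrix.trace_transpose (Sᵀ * Q * H)]
    simp [Matrix.transpose_mul, hQ, Matrix.mul_assoc]
  have c2 : Matrix.trace ((S-F0)ᵀ * H) = Matrix.trace (Hᵀ * (S-F0)) := by
    rw [← Matrix.trace_transpose ((S-F0)ᵀ * H)]
    simp [Matrix.transpose_mul]
  have czero : Matrix.trace (Hᵀ * (Q * S)) + lam * Matrix.trace (Hᵀ * (S - F0)) = 0 := by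
    have : Matrix.trace (Hᵀ * (Q * S + lam • (S - F0))) = 0 := by rw [hS]; simp
    rw [Matrix.mul_add, Matrix.trace_add, Matrix.mul_smul, Matrix.trace_smul] at this
    simpa using this
  rw [hSF]
  simp only [Matrix.transpose_add, Matrix.add_mul, Matrix.mul_add, Matrix.trace_add,
    Matrix.smul_mul, Matrix.mul_smul, Matrix.trace_smul, Matrix.one_mul, smul_eq_mul]
  have c1' : Matrix.trace (Hᵀ * Q * S) = Matrix.trace (Hᵀ * (Q * S)) := by
    rw [Matrix.mul_assoc]
  have c3 : Matrix.trace (Hᵀ * Q * H) = Matrix.trace (Hᵀ * (Q * H)) := by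
    rw [Matrix.mul_assoc]
  linear_combination c1 + lam * c2 + 2 * czero + 2 * c1' + c3

/-- Powers of the contraction matrix tend to zero. -/
lemma appnp_pow_tendsto (n : ℕ) (A : Matrix (Fin n) (Fin n) ℝ)
    (hnorm : ‖Matrix.toEuclideanCLM (𝕜 := ℝ) A‖ ≤ 1) (lam : ℝ) (hlam : 0 < lam) :
    Filter.Tendsto (fun k : ℕ => ((1/(1+lam)) • A)^k) Filter.atTop (nhds 0) := by
  set e := Matrix.toEuclideanCLM (𝕜 := ℝ) (n := Fin n)
  have hTn : ‖e ((1/(1+lam)) • A)‖ < 1 := by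
    rw [_root_.map_smul e (1/(1+lam)) A, norm_smul]
    have h1 : (0:ℝ) < 1 + lam := by linarith
    have : |1/(1+lam)| = 1/(1+lam) := abs_of_pos (by positivity)
    rw [Real.norm_eq_abs, this]
    calc 1/(1+lam) * ‖e A‖ ≤ 1/(1+lam) * 1 := by
          apply mul_le_mul_of_nonneg_left hnorm (by positivity)
      _ < 1 := by rw [mul_one]; rw [div_lt_one h1]; linarith
  have hT := tendsto_pow_atTop_nhds_zero_of_norm_lt_one hTn
  let L : (EuclideanSpace ℝ (Fin n) →L[ℝ] EuclideanSpace ℝ (Fin n)) →ₗ[ℝ]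
      Matrix (Fin n) (Fin n) ℝ :=
    { toFun := e.symm, map_add' := fun x y => map_add _ x y,
      map_smul' := fun c x => _root_.map_smul e.symm c x }
  have hLc : Continuous L := L.continuous_of_finiteDimensional
  have hpow : ∀ k : ℕ, ((1/(1+lam)) • A)^k = L ((e ((1/(1+lam)) • A))^k) := by
    intro k
    rw [← map_pow]
    show _ = e.symm (e _)
    rw [StarAlgEquiv.symm_apply_apply]
  simp only [hpow]
  have := (hLc.tendsto 0).comp hT
  simpa [Function.comp_def] using this

/-- APPNP fixed-point recovery: with `‖Ã‖₂ ≤ 1` (ℓ2 operator norm, expressed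
via `toEuclideanCLM`), symmetric `Ã`, and `λ > 0`, the iteration
`F^{(k+1)} = (1/(1+λ))ÃF^{(k)} + (λ/(1+λ))F^{(0)}` converges to the unique
fixed point `F* = λ((1+λ)I − Ã)⁻¹F^{(0)}`, which is the unique minimizer of the
ℓ2 graph smoothing objective `tr(Fᵀ(I − Ã)F) + λ‖F − F^{(0)}‖²`. -/
theorem appnp_fixed_point (n d : ℕ)
    (Atil : Matrix (Fin n) (Fin n) ℝ) (hsymm : Atil.IsSymm)
    (hnorm : ‖Matrix.toEuclideanCLM (𝕜 := ℝ) Atil‖ ≤ 1)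
    (lam : ℝ) (hlam : 0 < lam)
    (F0 : Matrix (Fin n) (Fin d) ℝ)
    (F : ℕ → Matrix (Fin n) (Fin d) ℝ)
    (hrec : ∀ k, F (k+1) = (1/(1+lam)) • (Atil * F k) + (lam/(1+lam)) • F0)
    (Fstar : Matrix (Fin n) (Fin d) ℝ)
    (hFstar : Fstar
      = lam • ((1+lam) • (1 : Matrix (Fin n) (Fin n) ℝ) - Atil)⁻¹ * F0) :
    Filter.Tendsto F Filter.atTop (nhds Fstar) ∧
    (∀ G : Matrix (Fin n) (Fin d) ℝ,
      (1/(1+lam)) • (Atil * G) + (lam/(1+lam)) • F0 = G ↔ G = Fstar) ∧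
    (∀ G : Matrix (Fin n) (Fin d) ℝ, G ≠ Fstar →
      Matrix.trace (Fstarᵀ * ((1 : Matrix (Fin n) (Fin n) ℝ) - Atil) * Fstar)
          + lam * Matrix.trace ((Fstar - F0)ᵀ * (Fstar - F0))
        < Matrix.trace (Gᵀ * ((1 : Matrix (Fin n) (Fin n) ℝ) - Atil) * G)
          + lam * Matrix.trace ((G - F0)ᵀ * (G - F0))) := by
  have h1lam : (0:ℝ) < 1 + lam := by linarith
  set M : Matrix (Fin n) (Fin n) ℝ := (1+lam) • (1 : Matrix (Fin n) (Fin n) ℝ) - Atil with hM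
  have hquad := appnp_quad_bound n Atil hnorm
  have hMpd : M.PosDef := appnp_posdef n Atil hsymm lam hlam hquad
  have hMdet : IsUnit M.det := (Matrix.isUnit_iff_isUnit_det M).mp hMpd.isUnit
  have hMinvl : M⁻¹ * M = 1 := Matrix.nonsing_inv_mul M hMdet
  have hMinvr : M * M⁻¹ = 1 := Matrix.mul_nonsing_inv M hMdet
  -- the fixed point equation for Fstar
  have hfix : M * Fstar = lam • F0 := by
    rw [hFstar, Matrix.smul_mul, Matrix.mul_smul, ← Matrix.mul_assoc, hMinvr,
      Matrix.one_mul]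
  have hMmul : ∀ G : Matrix (Fin n) (Fin d) ℝ, M * G = (1+lam) • G - Atil * G := by
    intro G
    rw [hM, Matrix.sub_mul, Matrix.smul_mul, Matrix.one_mul]
  have hAF : Atil * Fstar = (1+lam) • Fstar - lam • F0 := by
    have := hfix
    rw [hMmul] at this
    linear_combination (norm := module) -this
  have hfixed : (1/(1+lam)) • (Atil * Fstar) + (lam/(1+lam)) • F0 = Fstar := by
    rw [hAF]
    match_scalars <;> field_simp <;> ring
  -- uniqueness of the fixed point
  have huniq : ∀ G : Matrix (Fin n) (Fin d) ℝ,
      (1/(1+lam)) • (Atil * G) + (lam/(1+lam)) • F0 = G ↔ G = Fstar := by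
    intro G
    constructor
    · intro hG
      have hMG : M * G = lam • F0 := by
        rw [hMmul]
        have h2 := congrArg (fun X => (1+lam) • X) hG
        simp only [smul_add, smul_smul] at h2
        have e1 : (1+lam) * (1/(1+lam)) = 1 := by field_simp
        have e2 : (1+lam) * (lam/(1+lam)) = lam := by field_simp
        rw [e1, e2, one_smul] at h2
        linear_combination (norm := module) -h2
      have : G = M⁻¹ * (M * G) := by rw [← Matrix.mul_assoc, hMinvl, Matrix.one_mul]
      rw [this, hMG, Matrix.mul_smul, hFstar, Matrix.smul_mul]
    · intro hG
      rw [hG]; exact hfixed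
  refine ⟨?_, huniq, ?_⟩
  · -- convergence
    set P : Matrix (Fin n) (Fin n) ℝ := (1/(1+lam)) • Atil with hP
    have hform : ∀ k, F k = Fstar + P^k * (F 0 - Fstar) := by
      intro k
      induction k with
      | zero => simp
      | succ k ih =>
        calc F (k+1) = (1/(1+lam)) • (Atil * Fstar) + (lam/(1+lam)) • F0
              + (1/(1+lam)) • (Atil * (P^k * (F 0 - Fstar))) := by
              rw [hrec k, ih, Matrix.mul_add, smul_add]; abel
          _ = Fstar + P^(k+1) * (F 0 - Fstar) := by
              rw [hfixed, pow_succ', Matrix.mul_assoc, hP, Matrix.smul_mul]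
    have hpt := appnp_pow_tendsto n Atil hnorm lam hlam
    have hcont : Continuous (fun X : Matrix (Fin n) (Fin n) ℝ =>
        Fstar + X * (F 0 - Fstar)) :=
      continuous_const.add (continuous_id.matrix_mul continuous_const)
    have := (hcont.tendsto 0).comp hpt
    simp only [Function.comp, Matrix.zero_mul, add_zero] at this
    have heq : F = fun k => Fstar + P^k * (F 0 - Fstar) := funext hform
    rw [heq]
    exact this
  · -- unique minimizer
    intro G hG
    set Q : Matrix (Fin n) (Fin n) ℝ := (1 : Matrix (Fin n) (Fin n) ℝ) - Atil with hQdef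
    have hQsymm : Qᵀ = Q := by
      rw [hQdef, Matrix.transpose_sub, Matrix.transpose_one, hsymm.eq]
    have hQM : Q + lam • (1:Matrix (Fin n) (Fin n) ℝ) = M := by
      rw [hQdef, hM]
      module
    have hstat : Q * Fstar + lam • (Fstar - F0) = 0 := by
      have h1 : Q * Fstar = Fstar - Atil * Fstar := by
        rw [hQdef, Matrix.sub_mul, Matrix.one_mul]
      rw [h1, hAF]
      module
    set H : Matrix (Fin n) (Fin d) ℝ := G - Fstar with hH
    have hHne : H ≠ 0 := sub_ne_zero_of_ne hG
    have hGeq : G = Fstar + H := by rw [hH]; abel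
    have hexp := appnp_expand n d Q hQsymm Fstar H F0 lam hstat
    have hpos : 0 < Matrix.trace (Hᵀ * ((Q + lam • (1:Matrix (Fin n) (Fin n) ℝ)) * H)) := by
      rw [hQM, ← Matrix.mul_assoc]
      exact appnp_trace_pos n d M hMpd H hHne
    rw [hGeq]
    rw [hexp]
    linarith
end
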